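/- If X has Left outcome L in misère play and X is not a starkiller, then Left, moving second, wins * + X; that is, the Right outcome of {0|0} + X is L. -/

import Mathlib

/-- Augmented (misère) game forms: finitely many Left and Right options,
    possibly adorned with a Left and/or Right tombstone marker. -/
inductive Aug : Type
  | mk (m n : ℕ) (L : Fin m → Aug) (R : Fin n → Aug) (tl tr : Bool) : Aug

namespace Aug

def numL : Aug → ℕ
  | mk m _ _ _ _ _ => m

def numR : Aug → ℕ
  | mk _ n _ _ _ _ => n

def moveL : (G : Aug) → Fin G.numL → Aug
  | mk _ _ L _ _ _ => L

def moveR : (G : Aug) → Fin G.numR → Aug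
  | mk _ _ _ R _ _ => R

def tombL : Aug → Bool
  | mk _ _ _ _ t _ => t

def tombR : Aug → Bool
  | mk _ _ _ _ _ t => t

instance : Zero Aug := ⟨mk 0 0 Fin.elim0 Fin.elim0 false false⟩

/-- Disjunctive sum of augmented forms (tombstones propagate to the sum). -/
protected noncomputable def add : Aug → Aug → Aug := by
  intro x
  induction x with
  | mk m n L R tl tr IHL IHR =>
    intro y
    induction y with
    | mk m' n' L' R' tl' tr' IHL' IHR' =>
      exact mk (m + m') (n + n')
        (Fin.addCases (motive := fun _ => Aug)
          (fun i => IHL i (mk m' n' L' R' tl' tr')) (fun j => IHL' j))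
        (Fin.addCases (motive := fun _ => Aug)
          (fun i => IHR i (mk m' n' L' R' tl' tr')) (fun j => IHR' j))
        (tl || tl') (tr || tr')

noncomputable instance : Add Aug := ⟨Aug.add⟩

/-- Conjugate: swap Left and Right throughout. -/
noncomputable def conj : Aug → Aug := by
  intro G
  induction G with
  | mk m n L R tl tr IHL IHR => exact mk n m IHR IHL tr tl

/-- A genuine game form: no tombstones anywhere. -/
def IsGame : Aug → Prop := by
  intro G
  induction G with
  | mk m n L R tl tr IHL IHR =>
    exact tl = false ∧ tr = false ∧ (∀ i, IHL i) ∧ (∀ j, IHR j)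

/-- Formal birthday (tombstones contribute nothing). -/
noncomputable def birthday : Aug → ℕ := by
  intro G
  induction G with
  | mk m n L R _ _ IHL IHR =>
    exact max (Finset.univ.sup fun i => IHL i + 1) (Finset.univ.sup fun j => IHR j + 1)

/-- `winsF G true` : Left, moving first, wins `G` in misère play
    (a Left end-like position is a first-player win for Left).
    `winsF G false` : Right, moving first, wins `G`. -/
def winsF : Aug → Bool → Prop := by
  intro G
  induction G with
  | mk m n L R tl tr IHL IHR =>
    intro b
    exact match b with
      | true => tl = true ∨ m = 0 ∨ ∃ i, ¬ IHL i false
      | false => tr = true ∨ n = 0 ∨ ∃ j, ¬ IHR j true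

/-- Left outcome is `L`. -/
def oL (G : Aug) : Prop := winsF G true

/-- Right outcome is `L` (Left, moving second, wins). -/
def oR (G : Aug) : Prop := ¬ winsF G false

/-- `outcome G ≥ outcome H` in the misère partial order of outcomes
    (Left prefers larger). -/
def outGe (G H : Aug) : Prop := (oL H → oL G) ∧ (oR H → oR G)

/-- `outcome G = outcome H`. -/
def outEq (G H : Aug) : Prop := (oL G ↔ oL H) ∧ (oR G ↔ oR H)

/-- `G ≥_A H`. -/
def geA (A : Set Aug) (G H : Aug) : Prop := ∀ X ∈ A, outGe (G + X) (H + X)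

/-- `G ≡_A H`. -/
def equivA (A : Set Aug) (G H : Aug) : Prop := ∀ X ∈ A, outEq (G + X) (H + X)

def LeftEnd (G : Aug) : Prop := G.numL = 0
def RightEnd (G : Aug) : Prop := G.numR = 0
def LeftEndLike (G : Aug) : Prop := G.tombL = true ∨ G.numL = 0
def RightEndLike (G : Aug) : Prop := G.tombR = true ∨ G.numR = 0

/-- `G` is Left `A`-strong. -/
def LeftStrong (A : Set Aug) (G : Aug) : Prop :=
  ∀ X ∈ A, LeftEnd X → winsF (G + X) true

/-- `G` is Right `A`-strong. -/
def RightStrong (A : Set Aug) (G : Aug) : Prop :=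
  ∀ X ∈ A, RightEnd X → winsF (G + X) false

/-- Hereditarily closed set of games. -/
def Hereditary (A : Set Aug) : Prop :=
  ∀ G ∈ A, (∀ i, G.moveL i ∈ A) ∧ (∀ j, G.moveR j ∈ A)

/-- An (absolute) universe of misère games. -/
structure IsUniverse (U : Set Aug) : Prop where
  games : ∀ G ∈ U, IsGame G
  zero_mem : (0 : Aug) ∈ U
  add_mem : ∀ G ∈ U, ∀ H ∈ U, G + H ∈ U
  conj_mem : ∀ G ∈ U, conj G ∈ U
  moveL_mem : ∀ G ∈ U, ∀ i, G.moveL i ∈ U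
  moveR_mem : ∀ G ∈ U, ∀ j, G.moveR j ∈ U
  dicotic : ∀ (m n : ℕ) (L : Fin m → Aug) (R : Fin n → Aug), 0 < m → 0 < n →
    (∀ i, L i ∈ U) → (∀ j, R j ∈ U) → mk m n L R false false ∈ U

/-- `Û`: the augmented forms admitting a `U`-expansion, i.e. equivalent
    modulo `U` to some member of `U`. -/
def hatU (U : Set Aug) : Set Aug := {G | ∃ G' ∈ U, equivA U G G'}

/-- `G` is `A`-invertible (with inverse in `A`). -/
def Invertible (A : Set Aug) (G : Aug) : Prop := ∃ H ∈ A, equivA A (G + H) 0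

/-- `G` is `U`-invertible with inverse in `Û`. -/
def InvertibleHat (U : Set Aug) (G : Aug) : Prop := ∃ H ∈ hatU U, equivA U (G + H) 0

/-- `G` is conjugate `A`-invertible. -/
def ConjInvertible (A : Set Aug) (G : Aug) : Prop :=
  conj G ∈ A ∧ equivA A (G + conj G) 0

/-- `A` is a monoid of games: a set of games containing `0`, closed under
    disjunctive sum, on which `≡_A` is a congruence. -/
structure IsMonoidOfGames (A : Set Aug) : Prop where
  games : ∀ G ∈ A, IsGame G
  zero_mem : (0 : Aug) ∈ A
  add_mem : ∀ G ∈ A, ∀ H ∈ A, G + H ∈ A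
  congr : ∀ G ∈ A, ∀ H ∈ A, ∀ J ∈ A, equivA A G H → equivA A (G + J) (H + J)

/-- `U`-simplest form: hereditarily, no dominated options, no reversible
    options, and no unnecessary tombstones. -/
def Simplest (U : Set Aug) : Aug → Prop := by
  intro G
  induction G with
  | mk m n L R tl tr IHL IHR =>
    exact
      (∀ i i' : Fin m, geA U (L i) (L i') → i = i') ∧
      (∀ j j' : Fin n, geA U (R j) (R j') → j = j') ∧
      (∀ i : Fin m, ∀ jj : Fin (L i).numR, ¬ geA U (mk m n L R tl tr) ((L i).moveR jj)) ∧
      (∀ j : Fin n, ∀ ii : Fin (R j).numL, ¬ geA U ((R j).moveL ii) (mk m n L R tl tr)) ∧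
      (tl = true → ¬ equivA U (mk m n L R tl tr) (mk m n L R false tr)) ∧
      (tr = true → ¬ equivA U (mk m n L R tl tr) (mk m n L R tl false)) ∧
      (∀ i, IHL i) ∧ (∀ j, IHR j)

lemma birthday_mk (m n : ℕ) (L : Fin m → Aug) (R : Fin n → Aug) (tl tr : Bool) :
    birthday (mk m n L R tl tr) =
      max (Finset.univ.sup fun i => birthday (L i) + 1)
          (Finset.univ.sup fun j => birthday (R j) + 1) := rfl

lemma birthday_moveL_lt : ∀ (G : Aug) (i : Fin G.numL), birthday (G.moveL i) < birthday G := by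
  intro G
  cases G with
  | mk m n L R tl tr =>
    intro i
    show birthday (L i) < birthday (mk m n L R tl tr)
    rw [birthday_mk]
    have h1 : birthday (L i) + 1 ≤ Finset.univ.sup (fun i => birthday (L i) + 1) :=
      Finset.le_sup (f := fun i => birthday (L i) + 1) (Finset.mem_univ i)
    exact lt_of_lt_of_le (Nat.lt_succ_self _) (h1.trans (le_max_left _ _))

lemma birthday_moveR_lt : ∀ (G : Aug) (j : Fin G.numR), birthday (G.moveR j) < birthday G := by
  intro G
  cases G with
  | mk m n L R tl tr =>
    intro j
    show birthday (R j) < birthday (mk m n L R tl tr)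
    rw [birthday_mk]
    have h1 : birthday (R j) + 1 ≤ Finset.univ.sup (fun j => birthday (R j) + 1) :=
      Finset.le_sup (f := fun j => birthday (R j) + 1) (Finset.mem_univ j)
    exact lt_of_lt_of_le (Nat.lt_succ_self _) (h1.trans (le_max_right _ _))

/-- A disintegrator. -/
def Disintegrator (G : Aug) : Prop :=
  ∃ j : Fin G.numR, (G.moveR j).numL ≠ 0 ∧
    ∀ i : Fin (G.moveR j).numL,
      ¬ winsF ((G.moveR j).moveL i) true ∨ Disintegrator ((G.moveR j).moveL i)
termination_by birthday G
decreasing_by exact lt_trans (birthday_moveL_lt _ _) (birthday_moveR_lt _ _)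

/-- A starkiller. -/
def Starkiller (G : Aug) : Prop :=
  ∃ j : Fin G.numR, winsF (G.moveR j) false ∧
    ∀ i : Fin (G.moveR j).numL,
      ¬ winsF ((G.moveR j).moveL i) true ∨ Starkiller ((G.moveR j).moveL i)
termination_by birthday G
decreasing_by exact lt_trans (birthday_moveL_lt _ _) (birthday_moveR_lt _ _)

def one : Aug := mk 1 0 (fun _ => 0) Fin.elim0 false false
def two : Aug := mk 1 0 (fun _ => one) Fin.elim0 false false
def star : Aug := mk 1 1 (fun _ => 0) (fun _ => 0) false false
/-- `conjugate(1) = {·|0}`. -/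
def oneConj : Aug := mk 0 1 Fin.elim0 (fun _ => 0) false false
/-- `{·|2}`. -/
def endTwo : Aug := mk 0 1 Fin.elim0 (fun _ => two) false false

/-- `n` copies of `G` summed. -/
noncomputable def nCopies : ℕ → Aug → Aug
  | 0, _ => 0
  | n + 1, G => nCopies n G + G

/-- Dicot: every subposition has both or neither kind of option. -/
def Dicot : Aug → Prop := by
  intro G
  induction G with
  | mk m n L R _ _ IHL IHR => exact (m = 0 ↔ n = 0) ∧ (∀ i, IHL i) ∧ (∀ j, IHR j)

/-- Hereditarily a Left end. -/
def LeftEndHered : Aug → Prop := by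
  intro G
  induction G with
  | mk m n L R _ _ IHL IHR => exact m = 0 ∧ (∀ j, IHR j)

/-- Hereditarily a Right end. -/
def RightEndHered : Aug → Prop := by
  intro G
  induction G with
  | mk m n L R _ _ IHL IHR => exact n = 0 ∧ (∀ i, IHL i)

/-- Dead-ending: once a player has no move in a subposition, that player
    never again has a move. -/
def DeadEnding : Aug → Prop := by
  intro G
  induction G with
  | mk m n L R tl tr IHL IHR =>
    exact (m = 0 → LeftEndHered (mk m n L R tl tr)) ∧
      (n = 0 → RightEndHered (mk m n L R tl tr)) ∧
      (∀ i, IHL i) ∧ (∀ j, IHR j)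

/-- Left weak set of games. -/
def LeftWeak (A : Set Aug) : Prop := ∀ G : Aug, LeftStrong A G ↔ LeftEndLike G

/-- Right weak set of games. -/
def RightWeak (A : Set Aug) : Prop := ∀ G : Aug, RightStrong A G ↔ RightEndLike G

end Aug


namespace Aug

lemma add_mk (m n : ℕ) (L : Fin m → Aug) (R : Fin n → Aug) (tl tr : Bool)
    (m' n' : ℕ) (L' : Fin m' → Aug) (R' : Fin n' → Aug) (tl' tr' : Bool) :
    mk m n L R tl tr + mk m' n' L' R' tl' tr' =
      mk (m+m') (n+n')
        (Fin.addCases (fun i => L i + mk m' n' L' R' tl' tr') (fun j => mk m n L R tl tr + L' j))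
        (Fin.addCases (fun i => R i + mk m' n' L' R' tl' tr') (fun j => mk m n L R tl tr + R' j))
        (tl||tl') (tr||tr') := rfl

lemma winsF_mk_true (m n : ℕ) (L : Fin m → Aug) (R : Fin n → Aug) (tl tr : Bool) :
    winsF (mk m n L R tl tr) true ↔ (tl = true ∨ m = 0 ∨ ∃ i, ¬ winsF (L i) false) := Iff.rfl

lemma winsF_mk_false (m n : ℕ) (L : Fin m → Aug) (R : Fin n → Aug) (tl tr : Bool) :
    winsF (mk m n L R tl tr) false ↔ (tr = true ∨ n = 0 ∨ ∃ j, ¬ winsF (R j) true) := Iff.rfl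

lemma isGame_mk (m n : ℕ) (L : Fin m → Aug) (R : Fin n → Aug) (tl tr : Bool) :
    IsGame (mk m n L R tl tr) ↔
      (tl = false ∧ tr = false ∧ (∀ i, IsGame (L i)) ∧ (∀ j, IsGame (R j))) := Iff.rfl

lemma isGame_moveL : ∀ (G : Aug), IsGame G → ∀ i, IsGame (G.moveL i) := by
  intro G
  cases G with
  | mk m n L R tl tr =>
    intro h i
    rw [isGame_mk] at h
    exact h.2.2.1 i

lemma winsF_zero_add (Y : Aug) :
    (winsF ((0 : Aug) + Y) true ↔ winsF Y true) ∧
    (winsF ((0 : Aug) + Y) false ↔ winsF Y false) := by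
  induction Y with
  | mk m n L R tl tr IHL IHR =>
    have h0 : (0 : Aug) = mk 0 0 Fin.elim0 Fin.elim0 false false := rfl
    rw [h0, add_mk, winsF_mk_true, winsF_mk_false, winsF_mk_true, winsF_mk_false]
    have keyL : (∃ i : Fin (0 + m), ¬ winsF
        ((Fin.addCases (motive := fun _ => Aug) (fun i => Fin.elim0 i + mk m n L R tl tr)
          (fun j => mk 0 0 Fin.elim0 Fin.elim0 false false + L j)) i) false) ↔ ∃ i, ¬ winsF (L i) false := by
      constructor
      · rintro ⟨i, hi⟩
        have hlt : (i : ℕ) < m := by omega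
        refine ⟨⟨i, hlt⟩, ?_⟩
        have he : i = Fin.natAdd 0 ⟨i, hlt⟩ := Fin.ext (by simp)
        rw [he, Fin.addCases_right] at hi
        exact fun hw => hi ((IHL _).2.mpr hw)
      · rintro ⟨i, hi⟩
        refine ⟨Fin.natAdd 0 i, ?_⟩
        rw [Fin.addCases_right]
        exact fun hw => hi ((IHL _).2.mp hw)
    have keyR : (∃ j : Fin (0 + n), ¬ winsF
        ((Fin.addCases (motive := fun _ => Aug) (fun i => Fin.elim0 i + mk m n L R tl tr)
          (fun j => mk 0 0 Fin.elim0 Fin.elim0 false false + R j)) j) true) ↔ ∃ j, ¬ winsF (R j) true := by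
      constructor
      · rintro ⟨j, hj⟩
        have hlt : (j : ℕ) < n := by omega
        refine ⟨⟨j, hlt⟩, ?_⟩
        have he : j = Fin.natAdd 0 ⟨j, hlt⟩ := Fin.ext (by simp)
        rw [he, Fin.addCases_right] at hj
        exact fun hw => hj ((IHR _).1.mpr hw)
      · rintro ⟨j, hj⟩
        refine ⟨Fin.natAdd 0 j, ?_⟩
        rw [Fin.addCases_right]
        exact fun hw => hj ((IHR _).1.mp hw)
    constructor
    · rw [keyL]; simp
    · rw [keyR]; simp

/-- If Right, moving first, loses `Y`, then Left, moving first, wins `* + Y`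
    (move `*` to `0`). -/
lemma winsF_star_add_of_right_loses (Y : Aug) (h : ¬ winsF Y false) :
    winsF (star + Y) true := by
  cases Y with
  | mk m n L R tl tr =>
    show winsF (mk 1 1 (fun _ => 0) (fun _ => 0) false false + mk m n L R tl tr) true
    rw [add_mk, winsF_mk_true]
    refine Or.inr (Or.inr ⟨Fin.castAdd m (0 : Fin 1), ?_⟩)
    rw [Fin.addCases_left]
    exact fun hw => h ((winsF_zero_add _).2.mp hw)

/-- If Left has a move in `Y` to `Y'` with `* + Y'` lost by Right moving first,
    then Left, moving first, wins `* + Y`. -/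
lemma winsF_star_add_of_moveL (Y : Aug) (i : Fin Y.numL)
    (h : ¬ winsF (star + Y.moveL i) false) : winsF (star + Y) true := by
  cases Y with
  | mk m n L R tl tr =>
    show winsF (mk 1 1 (fun _ => 0) (fun _ => 0) false false + mk m n L R tl tr) true
    rw [add_mk, winsF_mk_true]
    exact Or.inr (Or.inr ⟨Fin.natAdd 1 (i : Fin m), by erw [Fin.addCases_right]; exact h⟩)

lemma key : ∀ (N : ℕ) (X : Aug), birthday X < N → IsGame X → winsF X true →
    ¬ Starkiller X → ¬ winsF (star + X) false := by
  intro N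
  induction N with
  | zero => intro X h; omega
  | succ N IH =>
    intro X hb hG hW hS
    cases X with
    | mk m n L R tl tr =>
      rw [isGame_mk] at hG
      obtain ⟨htl, htr, hGL, hGR⟩ := hG
      subst htl htr
      show ¬ winsF (mk 1 1 (fun _ => 0) (fun _ => 0) false false +
        mk m n L R false false) false
      rw [add_mk, winsF_mk_false]
      push_neg
      refine ⟨by simp, by omega, ?_⟩
      intro j
      refine Fin.addCases (motive := fun j => winsF
        ((Fin.addCases (motive := fun _ => Aug)
          (fun i => (fun _ : Fin 1 => (0:Aug)) i + mk m n L R false false)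
          (fun j => star + R j)) j) true) ?_ ?_ j
      · -- Right moved * to 0 : position 0 + X, Left wins moving first
        intro i
        rw [Fin.addCases_left]
        exact (winsF_zero_add _).1.mpr hW
      · -- Right moved in X to R j : position * + R j
        intro j'
        rw [Fin.addCases_right]
        rw [Starkiller] at hS
        push_neg at hS
        by_cases hrj : winsF (R j') false
        · obtain ⟨i, hi⟩ := hS j' hrj
          refine winsF_star_add_of_moveL (R j') i (IH _ ?_ ?_ hi.1 hi.2)
          · have h1 : birthday ((R j').moveL i) < birthday (R j') :=
              birthday_moveL_lt _ i
            have h2 : birthday (R j') < birthday (mk m n L R false false) :=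
              birthday_moveR_lt (mk m n L R false false) j'
            omega
          · exact isGame_moveL _ (hGR j') i
        · exact winsF_star_add_of_right_loses _ hrj

end Aug

/-- if `X` has Left outcome `L` and is not a starkiller, then
Left, moving second, wins `* + X`. -/
theorem stmt15 (X : Aug) (hX : Aug.IsGame X) (hL : Aug.winsF X true)
    (h : ¬ Aug.Starkiller X) :
    ¬ Aug.winsF (Aug.star + X) false :=
  Aug.key (Aug.birthday X + 1) X (Nat.lt_succ_self _) hX hL h
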